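/- Let φ : ℝ → ℝ be a non-constant C¹ 1-periodic function and define h(x) = ∫_0^x φ(y)√(1+φ(y)²) dy, A(φ) = e^{h(1)} ∫_0^1 arctan(φ(x)) e^{−h(x)} φ(x)√(1+φ(x)²) (∫_0^x (1+φ(y)²) e^{h(y)} dy) dx, B(φ) = ∫_0^1 arctan(φ(x)) e^{−h(x)} φ(x)√(1+φ(x)²) (∫_x^1 (1+φ(y)²) e^{h(y)} dy) dx, and C(φ) = (e^{h(1)} − 1) ∫_0^1 arctan(φ(x)) (1+φ(x)²) dx. Then, with φ₊ = max{φ,0} and h⁻(x) = ∫_0^x φ₋√(1+φ₋²) dy (φ₋ = min{φ,0}), one has A(φ) + B(φ) − C(φ) ≥ e^{h⁻(1)} (A(φ₊) + B(φ₊) − C(φ₊)). -/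

import Mathlib

/-- Antiderivative `h(x) = ∫_0^x φ √(1+φ²)`. -/
noncomputable def hInt (φ : ℝ → ℝ) (x : ℝ) : ℝ :=
  ∫ y in (0:ℝ)..x, φ y * Real.sqrt (1 + φ y ^ 2)

noncomputable def Afun (φ : ℝ → ℝ) : ℝ :=
  Real.exp (hInt φ 1) *
    ∫ x in (0:ℝ)..1, Real.arctan (φ x) * Real.exp (-(hInt φ x)) * φ x *
      Real.sqrt (1 + φ x ^ 2) *
      ∫ y in (0:ℝ)..x, (1 + φ y ^ 2) * Real.exp (hInt φ y)

noncomputable def Bfun (φ : ℝ → ℝ) : ℝ :=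
  ∫ x in (0:ℝ)..1, Real.arctan (φ x) * Real.exp (-(hInt φ x)) * φ x *
    Real.sqrt (1 + φ x ^ 2) *
    ∫ y in x..1, (1 + φ y ^ 2) * Real.exp (hInt φ y)

noncomputable def Cfun (φ : ℝ → ℝ) : ℝ :=
  (Real.exp (hInt φ 1) - 1) *
    ∫ x in (0:ℝ)..1, Real.arctan (φ x) * (1 + φ x ^ 2)

namespace LemmaSign

open MeasureTheory intervalIntegral Set

/-- `K(y) = (1+f y²) e^{h(y)}`. -/
noncomputable def Kf (f : ℝ → ℝ) (y : ℝ) : ℝ := (1 + f y ^ 2) * Real.exp (hInt f y)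

/-- `J(x) = ∫_0^x K`. -/
noncomputable def Jf (f : ℝ → ℝ) (x : ℝ) : ℝ := ∫ y in (0:ℝ)..x, Kf f y

/-- `F(x) = e^{-h(x)} (e^{h(1)} J(x) + (J(1) - J(x)))`. -/
noncomputable def Ff (f : ℝ → ℝ) (x : ℝ) : ℝ :=
  Real.exp (-(hInt f x)) * (Real.exp (hInt f 1) * Jf f x + (Jf f 1 - Jf f x))

/-- The derivative of `F`. -/
noncomputable def Fd (f : ℝ → ℝ) (x : ℝ) : ℝ :=
  (Real.exp (hInt f 1) - 1) * (1 + f x ^ 2) - f x * Real.sqrt (1 + f x ^ 2) * Ff f x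

/-- The integrand such that `A + B - C = ∫_0^1 G`. -/
noncomputable def Gf (f : ℝ → ℝ) (x : ℝ) : ℝ :=
  Real.arctan (f x) * (f x * Real.sqrt (1 + f x ^ 2)) * Ff f x -
    (Real.exp (hInt f 1) - 1) * (Real.arctan (f x) * (1 + f x ^ 2))

section basic

lemma ii {g : ℝ → ℝ} (hg : Continuous g) (a b : ℝ) :
    IntervalIntegrable g MeasureTheory.volume a b := hg.intervalIntegrable a b

variable {f : ℝ → ℝ}

lemma cont_sq1 (hf : Continuous f) : Continuous fun y => f y * Real.sqrt (1 + f y ^ 2) :=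
  hf.mul (continuous_const.add (hf.pow 2)).sqrt

lemma hasDerivAt_hInt (hf : Continuous f) (x : ℝ) :
    HasDerivAt (hInt f) (f x * Real.sqrt (1 + f x ^ 2)) x := by
  exact intervalIntegral.integral_hasDerivAt_right
    ((cont_sq1 hf).intervalIntegrable _ _)
    ((cont_sq1 hf).stronglyMeasurableAtFilter _ _)
    (cont_sq1 hf).continuousAt

lemma cont_hInt (hf : Continuous f) : Continuous (hInt f) := by
  have : ∀ x : ℝ, HasDerivAt (hInt f) (f x * Real.sqrt (1 + f x ^ 2)) x :=
    hasDerivAt_hInt hf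
  exact continuous_iff_continuousAt.2 fun x => (this x).continuousAt

lemma cont_Kf (hf : Continuous f) : Continuous (Kf f) :=
  (continuous_const.add (hf.pow 2)).mul (cont_hInt hf).rexp

lemma Kf_pos (hf : Continuous f) (y : ℝ) : 0 < Kf f y := by
  have : (0:ℝ) < 1 + f y ^ 2 := by positivity
  exact mul_pos this (Real.exp_pos _)

lemma hasDerivAt_Jf (hf : Continuous f) (x : ℝ) : HasDerivAt (Jf f) (Kf f x) x :=
  intervalIntegral.integral_hasDerivAt_right
    ((cont_Kf hf).intervalIntegrable _ _)
    ((cont_Kf hf).stronglyMeasurableAtFilter _ _)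
    (cont_Kf hf).continuousAt

lemma cont_Jf (hf : Continuous f) : Continuous (Jf f) :=
  continuous_iff_continuousAt.2 fun x => (hasDerivAt_Jf hf x).continuousAt

lemma cont_Ff (hf : Continuous f) : Continuous (Ff f) := by
  unfold Ff
  exact ((cont_hInt hf).neg.rexp).mul
    ((continuous_const.mul (cont_Jf hf)).add (continuous_const.sub (cont_Jf hf)))

lemma cont_Fd (hf : Continuous f) : Continuous (Fd f) := by
  unfold Fd
  exact (continuous_const.mul (continuous_const.add (hf.pow 2))).sub
    ((cont_sq1 hf).mul (cont_Ff hf))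

lemma hasDerivAt_Ff (hf : Continuous f) (x : ℝ) : HasDerivAt (Ff f) (Fd f x) x := by
  have h1 := hasDerivAt_hInt hf x
  have h2 : HasDerivAt (fun t => Real.exp (-(hInt f t)))
      (Real.exp (-(hInt f x)) * (-(f x * Real.sqrt (1 + f x ^ 2)))) x := h1.neg.exp
  have h3 := hasDerivAt_Jf hf x
  have h4 : HasDerivAt (fun t => Real.exp (hInt f 1) * Jf f t + (Jf f 1 - Jf f t))
      (Real.exp (hInt f 1) * Kf f x + (0 - Kf f x)) x :=
    (h3.const_mul _).add ((hasDerivAt_const x (Jf f 1)).sub h3)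
  have h5 := h2.mul h4
  convert h5 using 1
  show Fd f x = _
  unfold Fd Ff Kf
  rw [Real.exp_neg]
  have hx : Real.exp (hInt f x) ≠ 0 := Real.exp_ne_zero _
  field_simp
  ring
  all_goals rfl

lemma Jf_zero : Jf f 0 = 0 := intervalIntegral.integral_same

lemma Jf_nonneg (hf : Continuous f) {x : ℝ} (hx : 0 ≤ x) : 0 ≤ Jf f x := by
  unfold Jf
  exact intervalIntegral.integral_nonneg hx fun y _ => (Kf_pos hf y).le

lemma Jf_split (hf : Continuous f) (x : ℝ) : (∫ y in x..1, Kf f y) = Jf f 1 - Jf f x := by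
  have h := intervalIntegral.integral_add_adjacent_intervals
    (ii (cont_Kf hf) 0 x) (ii (cont_Kf hf) x 1)
  show (∫ y in x..1, Kf f y) = (∫ y in (0:ℝ)..1, Kf f y) - ∫ y in (0:ℝ)..x, Kf f y
  linarith

lemma Jf_le (hf : Continuous f) {x : ℝ} (hx : x ≤ 1) : Jf f x ≤ Jf f 1 := by
  have : (0:ℝ) ≤ ∫ y in x..1, Kf f y :=
    intervalIntegral.integral_nonneg hx fun y _ => (Kf_pos hf y).le
  rw [Jf_split hf] at this
  linarith

lemma Jf_one_pos (hf : Continuous f) : 0 < Jf f 1 :=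
  intervalIntegral.intervalIntegral_pos_of_pos ((cont_Kf hf).intervalIntegrable 0 1)
    (Kf_pos hf) one_pos

lemma Ff_pos (hf : Continuous f) {x : ℝ} (hx : x ∈ Icc (0:ℝ) 1) : 0 < Ff f x := by
  obtain ⟨hx0, hx1⟩ := hx
  have hJ0 := Jf_nonneg hf hx0
  have hJ1 := Jf_le hf hx1
  have hE := Real.exp_pos (hInt f 1)
  have hmin : min (Real.exp (hInt f 1)) 1 > 0 := lt_min hE one_pos
  have : min (Real.exp (hInt f 1)) 1 * Jf f 1 ≤
      Real.exp (hInt f 1) * Jf f x + (Jf f 1 - Jf f x) := by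
    have b1 : min (Real.exp (hInt f 1)) 1 * Jf f x ≤ Real.exp (hInt f 1) * Jf f x :=
      mul_le_mul_of_nonneg_right (min_le_left _ _) hJ0
    have b2 : min (Real.exp (hInt f 1)) 1 * (Jf f 1 - Jf f x) ≤ 1 * (Jf f 1 - Jf f x) :=
      mul_le_mul_of_nonneg_right (min_le_right _ _) (by linarith)
    nlinarith
  have hpos : 0 < Real.exp (hInt f 1) * Jf f x + (Jf f 1 - Jf f x) :=
    lt_of_lt_of_le (mul_pos hmin (Jf_one_pos hf)) this
  exact mul_pos (Real.exp_pos _) hpos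

lemma Ff_zero : Ff f 0 = Jf f 1 := by
  unfold Ff
  rw [show hInt f 0 = 0 from intervalIntegral.integral_same, Jf_zero]
  simp

lemma Ff_one (hf : Continuous f) : Ff f 1 = Jf f 1 := by
  unfold Ff
  rw [Real.exp_neg]
  have hx : Real.exp (hInt f 1) ≠ 0 := Real.exp_ne_zero _
  field_simp
  ring

/-- `A + B - C = ∫_0^1 G`. -/
lemma ABC_eq (hf : Continuous f) : Afun f + Bfun f - Cfun f = ∫ x in (0:ℝ)..1, Gf f x := by
  have hα : Continuous fun x => Real.arctan (f x) := Real.continuous_arctan.comp hf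
  have hP : Continuous fun x => Real.arctan (f x) * Real.exp (-(hInt f x)) * f x *
      Real.sqrt (1 + f x ^ 2) * Jf f x :=
    ((((hα.mul (cont_hInt hf).neg.rexp).mul hf).mul
      (continuous_const.add (hf.pow 2)).sqrt).mul (cont_Jf hf))
  have hQ : Continuous fun x => Real.arctan (f x) * Real.exp (-(hInt f x)) * f x *
      Real.sqrt (1 + f x ^ 2) * (Jf f 1 - Jf f x) :=
    ((((hα.mul (cont_hInt hf).neg.rexp).mul hf).mul
      (continuous_const.add (hf.pow 2)).sqrt).mul (continuous_const.sub (cont_Jf hf)))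
  have hR : Continuous fun x => Real.arctan (f x) * (1 + f x ^ 2) :=
    hα.mul (continuous_const.add (hf.pow 2))
  have eA : Afun f = ∫ x in (0:ℝ)..1, Real.exp (hInt f 1) *
      (Real.arctan (f x) * Real.exp (-(hInt f x)) * f x * Real.sqrt (1 + f x ^ 2) * Jf f x) := by
    rw [intervalIntegral.integral_const_mul]
    rfl
  have eB : Bfun f = ∫ x in (0:ℝ)..1, Real.arctan (f x) * Real.exp (-(hInt f x)) * f x *
      Real.sqrt (1 + f x ^ 2) * (Jf f 1 - Jf f x) := by
    unfold Bfun
    refine intervalIntegral.integral_congr fun x _ => ?_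
    rw [← Jf_split hf x]
    rfl
  have eC : Cfun f = ∫ x in (0:ℝ)..1, (Real.exp (hInt f 1) - 1) *
      (Real.arctan (f x) * (1 + f x ^ 2)) := by
    rw [intervalIntegral.integral_const_mul]
    rfl
  rw [eA, eB, eC]
  rw [← intervalIntegral.integral_add ((continuous_const.fun_mul hP).intervalIntegrable 0 1)
    (hQ.intervalIntegrable 0 1),
    ← intervalIntegral.integral_sub
      (((continuous_const.fun_mul hP).fun_add hQ).intervalIntegrable 0 1)
      ((continuous_const.fun_mul hR).intervalIntegrable 0 1)]
  refine intervalIntegral.integral_congr fun x _ => ?_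
  show _ = Gf f x
  unfold Gf Ff
  ring

end basic


section main

variable {φ : ℝ → ℝ}

/-- Pointwise splitting of the integrand of `hInt`. -/
lemma sq1_split (a : ℝ) :
    a * Real.sqrt (1 + a ^ 2) =
      max a 0 * Real.sqrt (1 + max a 0 ^ 2) + min a 0 * Real.sqrt (1 + min a 0 ^ 2) := by
  rcases le_total a 0 with h | h
  · rw [max_eq_right h, min_eq_left h]
    norm_num
  · rw [max_eq_left h, min_eq_right h]
    norm_num

lemma hInt_split (hφc : Continuous φ) (t : ℝ) :
    hInt φ t = hInt (fun x => max (φ x) 0) t + hInt (fun x => min (φ x) 0) t := by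
  unfold hInt
  rw [← intervalIntegral.integral_add
    (ii (cont_sq1 (hφc.max continuous_const)) 0 t)
    (ii (cont_sq1 (hφc.min continuous_const)) 0 t)]
  exact intervalIntegral.integral_congr fun y _ => sq1_split (φ y)

lemma hm_anti (hφc : Continuous φ) {u v : ℝ} (huv : u ≤ v) :
    hInt (fun x => min (φ x) 0) v ≤ hInt (fun x => min (φ x) 0) u := by
  set χ : ℝ → ℝ := fun x => min (φ x) 0 with hχ
  have hcχ : Continuous χ := hφc.min continuous_const
  have hsplit := intervalIntegral.integral_add_adjacent_intervals
    (ii (cont_sq1 hcχ) 0 u) (ii (cont_sq1 hcχ) u v)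
  have hnp : (∫ y in u..v, χ y * Real.sqrt (1 + χ y ^ 2)) ≤ 0 := by
    have h0 : (∫ y in u..v, (0:ℝ)) = 0 := by simp
    calc (∫ y in u..v, χ y * Real.sqrt (1 + χ y ^ 2))
        ≤ ∫ y in u..v, (0:ℝ) := by
          apply intervalIntegral.integral_mono_on huv (ii (cont_sq1 hcχ) u v)
            (ii continuous_const u v)
          intro y _
          have h1 : χ y ≤ 0 := min_le_right _ _
          have h2 : 0 ≤ Real.sqrt (1 + χ y ^ 2) := Real.sqrt_nonneg _
          nlinarith
      _ = 0 := h0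
  show hInt χ v ≤ hInt χ u
  unfold hInt
  linarith [hsplit]

lemma hm_nonpos (hφc : Continuous φ) {t : ℝ} (ht : 0 ≤ t) :
    hInt (fun x => min (φ x) 0) t ≤ 0 := by
  have h0 : hInt (fun x => min (φ x) 0) 0 = 0 := intervalIntegral.integral_same
  have := hm_anti hφc ht
  linarith

/-- Key pointwise comparison `e^{h⁻(1)} F_ψ ≤ F_φ` on `[0,1]`. -/
lemma Ff_comp (hφc : Continuous φ) {x : ℝ} (hx : x ∈ Icc (0:ℝ) 1) :
    Real.exp (hInt (fun x => min (φ x) 0) 1) * Ff (fun x => max (φ x) 0) x ≤ Ff φ x := by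
  obtain ⟨hx0, hx1⟩ := hx
  set ψ : ℝ → ℝ := fun x => max (φ x) 0 with hψdef
  set χ : ℝ → ℝ := fun x => min (φ x) 0 with hχdef
  have hcψ : Continuous ψ := hφc.max continuous_const
  have hcχ : Continuous χ := hφc.min continuous_const
  have hs := hInt_split hφc
  have hyx : ∀ y, 1 + ψ y ^ 2 ≤ 1 + φ y ^ 2 := by
    intro y
    have : ψ y ^ 2 ≤ φ y ^ 2 := by
      rcases le_total (φ y) 0 with h | h
      · rw [show ψ y = 0 from max_eq_right h]
        simpa using sq_nonneg (φ y)
      · rw [show ψ y = φ y from max_eq_left h]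
    linarith
  -- first piece : on [0,x]
  have I1 : Real.exp (hInt χ 1 + (hInt ψ 1 - hInt ψ x)) * Jf ψ x ≤
      Real.exp (hInt φ 1 - hInt φ x) * Jf φ x := by
    unfold Jf
    rw [← intervalIntegral.integral_const_mul, ← intervalIntegral.integral_const_mul]
    apply intervalIntegral.integral_mono_on hx0
      (ii (continuous_const.fun_mul (cont_Kf hcψ)) 0 x)
      (ii (continuous_const.fun_mul (cont_Kf hφc)) 0 x)
    intro y hy
    unfold Kf
    have e1 : Real.exp (hInt χ 1 + (hInt ψ 1 - hInt ψ x)) * ((1 + ψ y ^ 2) * Real.exp (hInt ψ y)) =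
        (1 + ψ y ^ 2) * Real.exp (hInt χ 1 + (hInt ψ 1 - hInt ψ x) + hInt ψ y) := by
      rw [Real.exp_add (hInt χ 1 + (hInt ψ 1 - hInt ψ x)) (hInt ψ y)]; ring
    have e2 : Real.exp (hInt φ 1 - hInt φ x) * ((1 + φ y ^ 2) * Real.exp (hInt φ y)) =
        (1 + φ y ^ 2) * Real.exp (hInt φ 1 - hInt φ x + hInt φ y) := by
      rw [Real.exp_add (hInt φ 1 - hInt φ x) (hInt φ y)]; ring
    rw [e1, e2]
    have hexp : hInt χ 1 + (hInt ψ 1 - hInt ψ x) + hInt ψ y ≤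
        hInt φ 1 - hInt φ x + hInt φ y := by
      have hmono : hInt χ x ≤ hInt χ y := hm_anti hφc hy.2
      rw [hs 1, hs x, hs y]
      linarith
    exact mul_le_mul (hyx y) (Real.exp_le_exp.2 hexp) (Real.exp_pos _).le
      (by positivity)
  -- second piece : on [x,1]
  have I2 : Real.exp (hInt χ 1 + -(hInt ψ x)) * (Jf ψ 1 - Jf ψ x) ≤
      Real.exp (-(hInt φ x)) * (Jf φ 1 - Jf φ x) := by
    rw [← Jf_split hcψ x, ← Jf_split hφc x]
    rw [← intervalIntegral.integral_const_mul, ← intervalIntegral.integral_const_mul]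
    apply intervalIntegral.integral_mono_on hx1
      (ii (continuous_const.fun_mul (cont_Kf hcψ)) x 1)
      (ii (continuous_const.fun_mul (cont_Kf hφc)) x 1)
    intro y hy
    unfold Kf
    have e1 : Real.exp (hInt χ 1 + -(hInt ψ x)) * ((1 + ψ y ^ 2) * Real.exp (hInt ψ y)) =
        (1 + ψ y ^ 2) * Real.exp (hInt χ 1 + -(hInt ψ x) + hInt ψ y) := by
      rw [Real.exp_add (hInt χ 1 + -(hInt ψ x)) (hInt ψ y)]; ring
    have e2 : Real.exp (-(hInt φ x)) * ((1 + φ y ^ 2) * Real.exp (hInt φ y)) =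
        (1 + φ y ^ 2) * Real.exp (-(hInt φ x) + hInt φ y) := by
      rw [Real.exp_add (-(hInt φ x)) (hInt φ y)]; ring
    rw [e1, e2]
    have hexp : hInt χ 1 + -(hInt ψ x) + hInt ψ y ≤ -(hInt φ x) + hInt φ y := by
      have hm1 : hInt χ 1 ≤ hInt χ y := hm_anti hφc hy.2
      have hm2 : hInt χ x ≤ 0 := hm_nonpos hφc (le_trans hx0 (le_refl x))
      rw [hs x, hs y]
      linarith
    exact mul_le_mul (hyx y) (Real.exp_le_exp.2 hexp) (Real.exp_pos _).le
      (by positivity)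
  -- combine
  have expandφ : Ff φ x = Real.exp (hInt φ 1 - hInt φ x) * Jf φ x +
      Real.exp (-(hInt φ x)) * (Jf φ 1 - Jf φ x) := by
    unfold Ff
    simp only [Real.exp_sub, Real.exp_neg]
    field_simp
    try ring
  have expandψ : Real.exp (hInt χ 1) * Ff ψ x =
      Real.exp (hInt χ 1 + (hInt ψ 1 - hInt ψ x)) * Jf ψ x +
      Real.exp (hInt χ 1 + -(hInt ψ x)) * (Jf ψ 1 - Jf ψ x) := by
    unfold Ff
    simp only [Real.exp_add, Real.exp_sub, Real.exp_neg]
    field_simp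
    try ring
  rw [expandφ, expandψ]
  exact add_le_add I1 I2


lemma cont_Gf {f : ℝ → ℝ} (hf : Continuous f) : Continuous (Gf f) := by
  unfold Gf
  exact (((Real.continuous_arctan.comp hf).mul (cont_sq1 hf)).mul (cont_Ff hf)).sub
    (continuous_const.mul ((Real.continuous_arctan.comp hf).mul
      (continuous_const.add (hf.pow 2))))

/-- The central pointwise estimate `q·F' ≤ G_φ - e^{h⁻(1)} G_ψ` on `[0,1]`. -/
lemma main_ptwise (hφc : Continuous φ) {x : ℝ} (hx : x ∈ Icc (0:ℝ) 1) :
    (-(Real.arctan (min (φ x) 0))) * Fd φ x ≤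
      Gf φ x - Real.exp (hInt (fun y => min (φ y) 0) 1) * Gf (fun y => max (φ y) 0) x := by
  have hE : Real.exp (hInt φ 1) =
      Real.exp (hInt (fun y => min (φ y) 0) 1) *
        Real.exp (hInt (fun y => max (φ y) 0) 1) := by
    rw [hInt_split hφc 1, Real.exp_add]; ring
  rcases le_or_gt 0 (φ x) with hc | hc
  · have hFcomp := Ff_comp hφc hx
    have he1 : Real.exp (hInt (fun y => min (φ y) 0) 1) ≤ 1 := by
      simpa using Real.exp_le_exp.2 (hm_nonpos hφc zero_le_one)
    have hα : 0 ≤ Real.arctan (φ x) := by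
      rw [← Real.arctan_zero]; exact Real.arctan_strictMono.monotone hc
    rw [min_eq_right hc, Real.arctan_zero, neg_zero, zero_mul]
    have expand : Gf φ x -
        Real.exp (hInt (fun y => min (φ y) 0) 1) * Gf (fun y => max (φ y) 0) x =
        Real.arctan (φ x) * (φ x * Real.sqrt (1 + φ x ^ 2)) *
          (Ff φ x - Real.exp (hInt (fun y => min (φ y) 0) 1) * Ff (fun y => max (φ y) 0) x) +
        (Real.arctan (φ x) * (1 + φ x ^ 2)) *
          (1 - Real.exp (hInt (fun y => min (φ y) 0) 1)) := by
      simp only [Gf]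
      rw [max_eq_left hc, hE]
      ring
    rw [expand]
    have t1 : 0 ≤ Real.arctan (φ x) * (φ x * Real.sqrt (1 + φ x ^ 2)) *
        (Ff φ x - Real.exp (hInt (fun y => min (φ y) 0) 1) * Ff (fun y => max (φ y) 0) x) :=
      mul_nonneg (mul_nonneg hα (mul_nonneg hc (Real.sqrt_nonneg _))) (by linarith)
    have t2 : 0 ≤ (Real.arctan (φ x) * (1 + φ x ^ 2)) *
        (1 - Real.exp (hInt (fun y => min (φ y) 0) 1)) :=
      mul_nonneg (mul_nonneg hα (by positivity)) (by linarith)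
    linarith
  · rw [min_eq_left hc.le]
    have hGψ : Gf (fun y => max (φ y) 0) x = 0 := by
      simp only [Gf]
      rw [max_eq_right hc.le, Real.arctan_zero]
      ring
    rw [hGψ, mul_zero, sub_zero]
    simp only [Gf, Fd]
    apply le_of_eq
    ring

/-- The pointwise nonnegativity `(q - W(F))·F' ≥ 0`. -/
lemma pt_nonneg (hφc : Continuous φ) {x m : ℝ} (hmpos : 0 < m)
    (hmle : m ≤ Ff φ x) :
    0 ≤ (-(Real.arctan (min (φ x) 0)) -
      Real.arcsin (min (max ((1 - Real.exp (hInt φ 1)) / max (Ff φ x) m) 0) 1)) * Fd φ x := by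
  have hF : 0 < Ff φ x := lt_of_lt_of_le hmpos hmle
  rw [max_eq_left hmle]
  have hFd : Fd φ x = (Real.exp (hInt φ 1) - 1) * (1 + φ x ^ 2) -
      φ x * Real.sqrt (1 + φ x ^ 2) * Ff φ x := rfl
  set E1 := Real.exp (hInt φ 1) with hE1
  set F := Ff φ x with hFdef
  have hcl0 : 0 ≤ min (max ((1 - E1) / F) 0) 1 := le_min (le_max_right _ _) zero_le_one
  rcases le_or_gt 0 (φ x) with hc | hc
  · rw [min_eq_right hc, Real.arctan_zero, neg_zero]
    rcases lt_trichotomy (Fd φ x) 0 with hsgn | hsgn | hsgn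
    · have hW0 : 0 ≤ Real.arcsin (min (max ((1 - E1) / F) 0) 1) := Real.arcsin_nonneg.2 hcl0
      nlinarith
    · rw [hsgn, mul_zero]
    · have hsq : 0 ≤ φ x * Real.sqrt (1 + φ x ^ 2) * F :=
        mul_nonneg (mul_nonneg hc (Real.sqrt_nonneg _)) hF.le
      have hE1gt : 0 < E1 - 1 := by
        rw [hFd] at hsgn
        nlinarith [sq_nonneg (φ x)]
      have hneg : (1 - E1) / F < 0 := div_neg_of_neg_of_pos (by linarith) hF
      rw [max_eq_right hneg.le, min_eq_left zero_le_one, Real.arcsin_zero, sub_zero, zero_mul]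
  · rw [min_eq_left hc.le]
    have h1pos : (0:ℝ) < 1 + φ x ^ 2 := by positivity
    have hr2 : Real.sqrt (1 + φ x ^ 2) ^ 2 = 1 + φ x ^ 2 := Real.sq_sqrt h1pos.le
    have hrpos : 0 < Real.sqrt (1 + φ x ^ 2) := Real.sqrt_pos.2 h1pos
    have hq : -(Real.arctan (φ x)) =
        Real.arcsin (-(φ x) / Real.sqrt (1 + φ x ^ 2)) := by
      rw [Real.arctan_eq_arcsin, ← Real.arcsin_neg, neg_div]
    set r := Real.sqrt (1 + φ x ^ 2) with hrdef
    set tt := -(φ x) / r with httdef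
    have htt0 : 0 ≤ tt := div_nonneg (by linarith) hrpos.le
    have htt1 : tt ≤ 1 := by
      rw [httdef, div_le_one hrpos]
      nlinarith [hr2, hrpos]
    rw [hq]
    rcases lt_trichotomy (Fd φ x) 0 with hsgn | hsgn | hsgn
    · have hkey : (E1 - 1) * r < φ x * F := by
        have hid : (E1 - 1) * (1 + φ x ^ 2) = ((E1 - 1) * r) * r := by rw [← hr2]; ring
        rw [hFd] at hsgn
        have hrw : ((E1 - 1) * r) * r < (φ x * F) * r := by linarith [hid]
        exact lt_of_mul_lt_mul_right hrw hrpos.le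
      have h1 : tt * F ≤ 1 - E1 := by
        rw [httdef, div_mul_eq_mul_div, div_le_iff₀ hrpos]
        linarith [hkey]
      have h2 : tt ≤ (1 - E1) / F := (le_div_iff₀ hF).2 h1
      have h3 : tt ≤ min (max ((1 - E1) / F) 0) 1 :=
        le_min (le_trans h2 (le_max_left _ _)) htt1
      have harc := Real.monotone_arcsin h3
      nlinarith [mul_nonneg (sub_nonneg.2 harc) (neg_nonneg.2 hsgn.le)]
    · rw [hsgn, mul_zero]
    · have hkey : φ x * F < (E1 - 1) * r := by
        have hid : (E1 - 1) * (1 + φ x ^ 2) = ((E1 - 1) * r) * r := by rw [← hr2]; ring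
        rw [hFd] at hsgn
        have hrw : (φ x * F) * r < ((E1 - 1) * r) * r := by linarith [hid]
        exact lt_of_mul_lt_mul_right hrw hrpos.le
      have h1 : 1 - E1 ≤ tt * F := by
        rw [httdef, div_mul_eq_mul_div, le_div_iff₀ hrpos]
        linarith [hkey]
      have h2 : (1 - E1) / F ≤ tt := (div_le_iff₀ hF).2 (by linarith)
      have h3 : min (max ((1 - E1) / F) 0) 1 ≤ tt :=
        le_trans (min_le_left _ _) (max_le h2 htt0)
      have harc := Real.monotone_arcsin h3
      nlinarith [mul_nonneg (sub_nonneg.2 harc) hsgn.le]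

end main

end LemmaSign

open LemmaSign

theorem lemma_sign
    (φ : ℝ → ℝ) (hφ : ContDiff ℝ 1 φ) (hper : Function.Periodic φ 1)
    (hnc : ¬ ∃ c : ℝ, ∀ x, φ x = c) :
    Afun φ + Bfun φ - Cfun φ ≥
      Real.exp (hInt (fun x => min (φ x) 0) 1) *
        (Afun (fun x => max (φ x) 0) + Bfun (fun x => max (φ x) 0) -
          Cfun (fun x => max (φ x) 0)) := by
  have hφc : Continuous φ := hφ.continuous
  have hcψ : Continuous fun x => max (φ x) 0 := hφc.max continuous_const
  obtain ⟨x₀, hx₀mem, hx₀min⟩ :=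
    (isCompact_Icc : IsCompact (Set.Icc (0:ℝ) 1)).exists_isMinOn
      (Set.nonempty_Icc.2 zero_le_one) (cont_Ff hφc).continuousOn
  have hm0 : 0 < Ff φ x₀ := Ff_pos hφc hx₀mem
  set W : ℝ → ℝ := fun y =>
    Real.arcsin (min (max ((1 - Real.exp (hInt φ 1)) / max y (Ff φ x₀)) 0) 1) with hW
  have hWcont : Continuous W := by
    apply Real.continuous_arcsin.comp
    refine Continuous.min (Continuous.max (Continuous.div continuous_const
      (continuous_id.max continuous_const) fun y => ?_) continuous_const) continuous_const
    exact ne_of_gt (lt_of_lt_of_le hm0 (le_max_right _ _))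
  have hqc : Continuous fun x => -(Real.arctan (min (φ x) 0)) :=
    (Real.continuous_arctan.comp (hφc.min continuous_const)).neg
  have hzero : (∫ x in (0:ℝ)..1, W (Ff φ x) * Fd φ x) = 0 := by
    have hd : ∀ x ∈ Set.uIcc (0:ℝ) 1, HasDerivAt (Ff φ) (Fd φ x) x :=
      fun x _ => hasDerivAt_Ff hφc x
    have cv := intervalIntegral.integral_comp_smul_deriv hd (cont_Fd hφc).continuousOn hWcont
    have h1 : Ff φ 0 = Ff φ 1 := by rw [Ff_zero, Ff_one hφc]
    rw [h1, intervalIntegral.integral_same] at cv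
    have h2 : (∫ x in (0:ℝ)..1, W (Ff φ x) * Fd φ x) =
        ∫ x in (0:ℝ)..1, Fd φ x • (W ∘ Ff φ) x := by
      refine intervalIntegral.integral_congr fun x _ => ?_
      simp only [Function.comp_apply, smul_eq_mul]
      ring
    rw [h2, cv]
  have hsplit : (∫ x in (0:ℝ)..1, (-(Real.arctan (min (φ x) 0))) * Fd φ x) =
      (∫ x in (0:ℝ)..1, ((-(Real.arctan (min (φ x) 0))) - W (Ff φ x)) * Fd φ x) +
        ∫ x in (0:ℝ)..1, W (Ff φ x) * Fd φ x := by
    have c1 : Continuous fun x => (-(Real.arctan (min (φ x) 0)) - W (Ff φ x)) * Fd φ x :=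
      (hqc.sub (hWcont.comp (cont_Ff hφc))).mul (cont_Fd hφc)
    have c2 : Continuous fun x => W (Ff φ x) * Fd φ x :=
      (hWcont.comp (cont_Ff hφc)).mul (cont_Fd hφc)
    rw [← intervalIntegral.integral_add (ii c1 0 1) (ii c2 0 1)]
    refine intervalIntegral.integral_congr fun x _ => ?_
    ring
  have hS : 0 ≤ ∫ x in (0:ℝ)..1, (-(Real.arctan (min (φ x) 0))) * Fd φ x := by
    rw [hsplit, hzero, add_zero]
    apply intervalIntegral.integral_nonneg zero_le_one
    intro u hu
    simp only [hW]
    exact pt_nonneg hφc hm0 ((isMinOn_iff.1 hx₀min) u hu)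
  have hmono : (∫ x in (0:ℝ)..1, (-(Real.arctan (min (φ x) 0))) * Fd φ x) ≤
      ∫ x in (0:ℝ)..1, (Gf φ x - Real.exp (hInt (fun y => min (φ y) 0) 1) *
        Gf (fun y => max (φ y) 0) x) := by
    apply intervalIntegral.integral_mono_on zero_le_one
      (ii (hqc.mul (cont_Fd hφc)) 0 1)
      (ii ((cont_Gf hφc).sub (continuous_const.mul (cont_Gf hcψ))) 0 1)
    intro x hx
    exact main_ptwise hφc hx
  have hL : Afun φ + Bfun φ - Cfun φ = ∫ x in (0:ℝ)..1, Gf φ x := ABC_eq hφc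
  have hR : Real.exp (hInt (fun x => min (φ x) 0) 1) *
      (Afun (fun x => max (φ x) 0) + Bfun (fun x => max (φ x) 0) -
        Cfun (fun x => max (φ x) 0)) =
      ∫ x in (0:ℝ)..1, Real.exp (hInt (fun y => min (φ y) 0) 1) *
        Gf (fun y => max (φ y) 0) x := by
    rw [ABC_eq hcψ, intervalIntegral.integral_const_mul]
  have hdiff : (∫ x in (0:ℝ)..1, (Gf φ x - Real.exp (hInt (fun y => min (φ y) 0) 1) *
      Gf (fun y => max (φ y) 0) x)) =
      (∫ x in (0:ℝ)..1, Gf φ x) -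
      ∫ x in (0:ℝ)..1, Real.exp (hInt (fun y => min (φ y) 0) 1) *
        Gf (fun y => max (φ y) 0) x :=
    intervalIntegral.integral_sub (ii (cont_Gf hφc) 0 1)
      (ii (continuous_const.mul (cont_Gf hcψ)) 0 1)
  rw [ge_iff_le, hR, hL]
  have hfin := le_trans hS hmono
  rw [hdiff] at hfin
  linarith
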